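/- Let p be an odd prime and define L(X) = X^{2p+1} + X^{2p} + ⋯ + X^2 − X − 1 = (Σ_{k=2}^{2p+1} X^k) − X − 1 ∈ F_p[X]. Then the splitting field of L(X) over F_p is the field with p^p elements; that is, the Galois field GF(p, p) of order p^p is a splitting field of L over F_p = Z/pZ. -/

import Mathlib

open Polynomial

namespace SplitLAux

variable (p : ℕ) [Fact p.Prime]

noncomputable def Lp : (ZMod p)[X] :=
  (∑ k ∈ Finset.Icc 2 (2 * p + 1), X ^ k) - X - 1

lemma L_mul : ((X : (ZMod p)[X]) - 1) * Lp p = X ^ (2*p+2) - 2 * X ^ 2 + 1 := by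
  have h1 : (∑ k ∈ Finset.Icc 2 (2*p+1), (X:(ZMod p)[X]) ^ k)
      = X ^ 2 * ∑ i ∈ Finset.range (2*p), X ^ i := by
    rw [show Finset.Icc 2 (2*p+1) = Finset.Ico 2 (2*p+2) by ext x; simp; omega]
    rw [Finset.sum_Ico_eq_sum_range]
    rw [show 2*p+2-2 = 2*p by omega, Finset.mul_sum]
    apply Finset.sum_congr rfl
    intro i _
    rw [pow_add]
  have h2 : ((X:(ZMod p)[X]) - 1) * ∑ i ∈ Finset.range (2*p), X ^ i = X ^ (2*p) - 1 := by
    rw [mul_comm]; exact geom_sum_mul X (2*p)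
  have : ((X : (ZMod p)[X]) - 1) * Lp p
      = X ^ 2 * (((X:(ZMod p)[X]) - 1) * ∑ i ∈ Finset.range (2*p), X ^ i) - (X-1)*(X+1) := by
    unfold Lp; rw [h1]; ring
  rw [this, h2]; ring


lemma L_factor (m : ℕ) (hm : p = 2 * m + 1) :
    Lp p = (X + 1) * (X * ((X:(ZMod p)[X])^2 - 1)^m - C 1)
      * (X * ((X:(ZMod p)[X])^2 - 1)^m - C (-1)) := by
  have hX1 : ((X : (ZMod p)[X]) - 1) ≠ 0 := by
    intro h
    simpa using congrArg (fun f => Polynomial.eval 0 f) h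
  apply mul_left_cancel₀ hX1
  rw [L_mul]
  have hfrob : (((X:(ZMod p)[X])^2 - 1))^p = X^(2*p) - 1 := by
    rw [sub_pow_char, one_pow, ← pow_mul, mul_comm]
  have key : ((X:(ZMod p)[X]) - 1) * ((X + 1) * (X * ((X:(ZMod p)[X])^2 - 1)^m - C 1)
      * (X * ((X:(ZMod p)[X])^2 - 1)^m - C (-1)))
      = X^2 * (((X:(ZMod p)[X])^2 - 1)^(2*m+1)) - X^2 + 1 := by
    simp only [map_one, map_neg]
    ring
  rw [key, ← hm, hfrob]
  ring

noncomputable def Ap (k : ℕ) : (ZMod p)[X] :=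
  X ^ (2 * p ^ k) * (C (k : ZMod p) * X ^ 2 + C (1 - (k : ZMod p)))
    - C ((k : ZMod p) + 1) * X ^ 2 + C (k : ZMod p)

lemma L_dvd_A : ∀ k, 1 ≤ k → Lp p ∣ Ap p k := by
  have hbase : Lp p ∣ (X ^ (2*p+2) - 2 * X ^ 2 + 1 : (ZMod p)[X]) :=
    Dvd.intro_left _ (L_mul p)
  intro k hk
  induction k with
  | zero => omega
  | succ n ih =>
    rcases Nat.lt_or_ge n 1 with hn | hn
    · -- base case : n = 0, k = 1
      interval_cases n
      have : Ap p 1 = X ^ (2*p+2) - 2 * X ^ 2 + 1 := by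
        unfold Ap
        simp only [Nat.cast_one, pow_one, map_add, map_one, map_sub, sub_self, map_zero]
        ring
      rw [this]; exact hbase
    · have ihd := ih hn
      have hexp : Lp p ∣ Polynomial.expand (ZMod p) p (Ap p n) := by
        have h1 : Polynomial.expand (ZMod p) p (Ap p n) = (Ap p n) ^ p := by
          have := Polynomial.map_frobenius_expand p (Ap p n)
          rwa [ZMod.frobenius_zmod, Polynomial.map_id] at this
        rw [h1]
        exact ihd.trans (dvd_pow_self _ (Nat.Prime.pos Fact.out).ne')
      have hident : Ap p (n+1) = X^2 * Polynomial.expand (ZMod p) p (Ap p n)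
          - (C (n : ZMod p) * X ^ (2 * p ^ (n+1)) - C ((n : ZMod p) + 1))
            * (X ^ (2*p+2) - 2 * X ^ 2 + 1) := by
        unfold Ap
        simp only [map_sub, map_add, map_mul, map_pow, Polynomial.expand_X,
          Polynomial.expand_C]
        rw [← pow_mul, show p * (2 * p ^ n) = 2 * p ^ (n+1) by ring]
        simp only [Nat.cast_add, Nat.cast_one, C_add, C_sub, C_1]
        ring
      rw [hident]
      exact dvd_sub (Dvd.dvd.mul_left hexp _) (Dvd.dvd.mul_left hbase _)

lemma L_dvd_pow : Lp p ∣ (X ^ (2 * p ^ p) - X ^ 2 : (ZMod p)[X]) := by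
  have h := L_dvd_A p p (Nat.Prime.pos Fact.out)
  have : Ap p p = X ^ (2 * p ^ p) - X ^ 2 := by
    unfold Ap
    simp [ZMod.natCast_self]
  rwa [this] at h


lemma isCoprime_of_eval_ne {K : Type*} [Field K] (g : K[X]) (a : K)
    (h : g.eval a ≠ 0) : IsCoprime g (X - C a) := by
  obtain ⟨u, hu⟩ := Polynomial.X_sub_C_dvd_sub_C_eval (a := a) (p := g)
  have hinv : C (g.eval a)⁻¹ * C (g.eval a) = 1 := by
    rw [← C_mul, inv_mul_cancel₀ h, C_1]
  exact ⟨C (g.eval a)⁻¹, -(C (g.eval a)⁻¹ * u), by linear_combination (C (g.eval a)⁻¹) * hu + hinv⟩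

section G
variable (m : ℕ) (hm : p = 2 * (m + 1) + 1)

noncomputable def gp (ε : ZMod p) : (ZMod p)[X] :=
  X * ((X:(ZMod p)[X])^2 - 1)^(m+1) - C ε

lemma gp_deriv (hm : p = 2 * (m + 1) + 1) {ε : ZMod p} :
    (gp p m ε).derivative = -((X:(ZMod p)[X])^2 - 1)^m := by
  have hc : (C (((m+1 : ℕ)) : ZMod p) * 2 + 1 : (ZMod p)[X]) = 0 := by
    have h0 : ((2 * (m + 1) + 1 : ℕ) : (ZMod p)[X]) = 0 := by
      rw [← hm]; exact CharP.cast_eq_zero _ p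
    rw [map_natCast C]
    push_cast at h0 ⊢
    linear_combination h0
  unfold gp
  simp only [derivative_sub, derivative_C, derivative_mul, derivative_X, derivative_pow,
    derivative_X_pow, derivative_one, Nat.add_sub_cancel, one_mul, sub_zero,
    Nat.cast_ofNat, map_ofNat]
  linear_combination (((X:(ZMod p)[X])^2-1)^m * X^2) * hc

lemma gp_monic {ε : ZMod p} : (gp p m ε).Monic := by
  unfold gp
  rw [show ((1:(ZMod p)[X])) = C 1 from C_1.symm]
  have hf : (X * ((X:(ZMod p)[X])^2 - C 1)^(m+1)).Monic :=
    Polynomial.monic_X.mul ((Polynomial.monic_X_pow_sub_C (1 : ZMod p) two_ne_zero).pow _)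
  have hdeg : (X * ((X:(ZMod p)[X])^2 - C 1)^(m+1)).natDegree = 2*(m+1)+1 := by
    rw [Polynomial.monic_X.natDegree_mul
        ((Polynomial.monic_X_pow_sub_C (1 : ZMod p) two_ne_zero).pow _),
      Polynomial.natDegree_X,
      (Polynomial.monic_X_pow_sub_C (1 : ZMod p) two_ne_zero).natDegree_pow,
      natDegree_X_pow_sub_C]
    ring
  exact hf.sub_of_left (lt_of_le_of_lt Polynomial.degree_C_le
    (by rw [← Polynomial.natDegree_pos_iff_degree_pos, hdeg]; omega))

lemma gp_natDegree {ε : ZMod p} : (gp p m ε).natDegree = 2 * (m + 1) + 1 := by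
  unfold gp
  rw [Polynomial.natDegree_sub_C, show ((1:(ZMod p)[X])) = C 1 from C_1.symm,
    Polynomial.monic_X.natDegree_mul
      ((Polynomial.monic_X_pow_sub_C (1 : ZMod p) two_ne_zero).pow _),
    Polynomial.natDegree_X,
    (Polynomial.monic_X_pow_sub_C (1 : ZMod p) two_ne_zero).natDegree_pow,
    natDegree_X_pow_sub_C]
  ring


lemma gp_sep (hm : p = 2*(m+1)+1) {ε : ZMod p} (hε : ε = 1 ∨ ε = -1) :
    (gp p m ε).Separable := by
  have hε0 : ε ≠ 0 := by rcases hε with h | h <;> simp [h]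
  rw [Polynomial.separable_def, gp_deriv p m hm]
  apply IsCoprime.neg_right
  rw [show ((X:(ZMod p)[X])^2 - 1) = (X - C 1) * (X - C (-1)) by
    simp only [map_one, map_neg]; ring, mul_pow]
  apply IsCoprime.mul_right <;> apply IsCoprime.pow_right <;> apply isCoprime_of_eval_ne
  · simp [gp, hε0]
  · simp [gp, hε0]

lemma two_ne_zero' (hm : p = 2*(m+1)+1) : (2 : ZMod p) ≠ 0 := by
  have hp : p.Prime := Fact.out
  intro h
  have h2 : ((2:ℕ) : ZMod p) = 0 := by exact_mod_cast h
  rw [ZMod.natCast_eq_zero_iff] at h2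
  have := Nat.le_of_dvd (by norm_num) h2
  omega

lemma gp_dvd (hm : p = 2*(m+1)+1) {ε : ZMod p} (hε : ε = 1 ∨ ε = -1) :
    gp p m ε ∣ (X ^ (p ^ p) - X : (ZMod p)[X]) := by
  classical
  have hp : p.Prime := Fact.out
  have hε0 : ε ≠ 0 := by rcases hε with h | h <;> simp [h]
  have hdvdL : gp p m ε ∣ Lp p := by
    rw [L_factor p (m+1) hm]
    unfold gp
    rcases hε with h | h <;> rw [h] <;> simp only [map_neg, map_one]
    · exact ⟨(X+1) * (X*((X:(ZMod p)[X])^2-1)^(m+1) - (-1)), by ring⟩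
    · exact ⟨(X+1) * (X*((X:(ZMod p)[X])^2-1)^(m+1) - 1), by ring⟩
  have hfix : ∀ α : AlgebraicClosure (ZMod p),
      (Polynomial.aeval α) (gp p m ε) = 0 → α ^ (p ^ p) = α := by
    intro α hα
    have hL : (Polynomial.aeval α) (X ^ (2 * p ^ p) - X ^ 2 : (ZMod p)[X]) = 0 := by
      obtain ⟨c, hc⟩ := hdvdL.trans (L_dvd_pow p)
      rw [hc, map_mul, hα, zero_mul]
    have h2 : α ^ (2 * p ^ p) = α ^ 2 := by
      simpa only [map_sub, map_pow, Polynomial.aeval_X, sub_eq_zero] using hL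
    have h3 : (α ^ (p^p) - α) * (α ^ (p^p) + α) = 0 := by
      have h4 : (α ^ (p^p))^2 = α^2 := by rw [← pow_mul, mul_comm]; exact h2
      linear_combination h4
    rcases mul_eq_zero.mp h3 with h | h
    · exact sub_eq_zero.mp h
    · exfalso
      have hneg : α ^ (p^p) = -α := eq_neg_of_add_eq_zero_left h
      have hcomp : (iterateFrobenius (AlgebraicClosure (ZMod p)) p p).comp
          (algebraMap (ZMod p) (AlgebraicClosure (ZMod p)))
          = algebraMap (ZMod p) (AlgebraicClosure (ZMod p)) := Subsingleton.elim _ _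
      have hg2 : Polynomial.eval₂ (algebraMap (ZMod p) (AlgebraicClosure (ZMod p)))
          (α ^ p ^ p) (gp p m ε) = 0 := by
        have hh := Polynomial.hom_eval₂ (gp p m ε)
          (algebraMap (ZMod p) (AlgebraicClosure (ZMod p)))
          (iterateFrobenius (AlgebraicClosure (ZMod p)) p p) α
        rw [hcomp] at hh
        rw [Polynomial.aeval_def] at hα
        rw [hα, map_zero, iterateFrobenius_def] at hh
        exact hh.symm
      rw [← Polynomial.aeval_def, hneg] at hg2
      simp only [gp, map_sub, map_mul, map_pow, map_one, Polynomial.aeval_X,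
        Polynomial.aeval_C, sub_eq_zero] at hα hg2
      have hsum : algebraMap (ZMod p) (AlgebraicClosure (ZMod p)) ε * 2 = 0 := by
        have hsq : ((-α)^2 : AlgebraicClosure (ZMod p)) = α ^ 2 := by ring
        rw [hsq] at hg2
        linear_combination -hg2 - hα
      have hKsum : (ε * 2 : ZMod p) = 0 := by
        apply (algebraMap (ZMod p) (AlgebraicClosure (ZMod p))).injective
        rw [map_mul, map_zero, map_ofNat]
        exact hsum
      rcases mul_eq_zero.mp hKsum with h' | h'
      · exact hε0 h'
      · exact (two_ne_zero' p m hm) h'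
  have hq1 : p ^ p ≠ 1 := Nat.ne_of_gt (Nat.one_lt_pow hp.pos.ne' hp.one_lt)
  have hM0 : (X ^ (p^p) - X : (AlgebraicClosure (ZMod p))[X]) ≠ 0 := by
    intro h
    have := congrArg (fun f => Polynomial.coeff f (p^p)) h
    simp [Polynomial.coeff_X, Ne.symm hq1] at this
  have hmon := gp_monic p m (ε := ε)
  have hsep' : ((gp p m ε).map
      (algebraMap (ZMod p) (AlgebraicClosure (ZMod p)))).Separable :=
    (gp_sep p m hm hε).map
  have hgΩ : (gp p m ε).map (algebraMap (ZMod p) (AlgebraicClosure (ZMod p)))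
      ∣ (X ^ (p^p) - X : (AlgebraicClosure (ZMod p))[X]) := by
    have heq : (gp p m ε).map (algebraMap (ZMod p) (AlgebraicClosure (ZMod p)))
        = (((gp p m ε).map (algebraMap (ZMod p)
            (AlgebraicClosure (ZMod p)))).roots.map fun a => X - C a).prod :=
      (IsAlgClosed.splits _).eq_prod_roots_of_monic (hmon.map _)
    nth_rewrite 1 [heq]
    rw [Multiset.prod_X_sub_C_dvd_iff_le_roots hM0, Multiset.le_iff_count]
    intro a
    by_cases ha : a ∈ ((gp p m ε).map
        (algebraMap (ZMod p) (AlgebraicClosure (ZMod p)))).roots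
    · rw [Multiset.count_eq_one_of_mem (Polynomial.nodup_roots hsep') ha]
      have haroot : (Polynomial.aeval a) (gp p m ε) = 0 := by
        have hmem := (Polynomial.mem_roots (fun h0 => (hmon.map
          (algebraMap (ZMod p) (AlgebraicClosure (ZMod p)))).ne_zero h0)).mp ha
        rwa [Polynomial.IsRoot, Polynomial.eval_map, ← Polynomial.aeval_def] at hmem
      have hmem2 : a ∈ (X ^ (p^p) - X : (AlgebraicClosure (ZMod p))[X]).roots := by
        rw [Polynomial.mem_roots hM0]
        simp [Polynomial.IsRoot, hfix a haroot]
      exact Multiset.count_pos.mpr hmem2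
    · rw [Multiset.count_eq_zero_of_notMem ha]
      exact Nat.zero_le _
  rw [show (X ^ (p^p) - X : (AlgebraicClosure (ZMod p))[X])
      = ((X ^ (p^p) - X : (ZMod p)[X])).map (algebraMap (ZMod p) (AlgebraicClosure (ZMod p))) by
    simp only [Polynomial.map_sub, Polynomial.map_pow, Polynomial.map_X]] at hgΩ
  exact (Polynomial.map_dvd_map _ (algebraMap (ZMod p)
    (AlgebraicClosure (ZMod p))).injective hmon).mp hgΩ


lemma L_eq_prod (hm : p = 2*(m+1)+1) :
    Lp p = (X + 1) * (gp p m 1 * gp p m (-1)) := by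
  rw [L_factor p (m+1) hm]
  unfold gp
  ring

lemma L_dvd_qX (hm : p = 2*(m+1)+1) : Lp p ∣ (X ^ (p^p) - X : (ZMod p)[X]) := by
  have hp : p.Prime := Fact.out
  have h2 : (2 : ZMod p) ≠ 0 := two_ne_zero' p m hm
  have hq_odd : Odd (p ^ p) := Odd.pow ⟨m+1, hm⟩
  have hX1 : (X + 1 : (ZMod p)[X]) ∣ (X ^ (p^p) - X) := by
    rw [show (X + 1 : (ZMod p)[X]) = X - C (-1) by rw [map_neg, map_one, sub_neg_eq_add],
      Polynomial.dvd_iff_isRoot]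
    simp [Polynomial.IsRoot, hq_odd.neg_one_pow]
  have hg1 := gp_dvd p m hm (Or.inl rfl)
  have hg2 := gp_dvd p m hm (Or.inr rfl)
  have hcop12 : IsCoprime (gp p m 1) (gp p m (-1)) := by
    refine ⟨-C (2⁻¹ : ZMod p), C (2⁻¹ : ZMod p), ?_⟩
    unfold gp
    rw [map_neg, map_one]
    have h21 : (C (2⁻¹ : ZMod p) * 2 : (ZMod p)[X]) = 1 := by
      rw [show (2:(ZMod p)[X]) = C 2 from (map_ofNat C 2).symm, ← C_mul,
        inv_mul_cancel₀ h2, C_1]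
    linear_combination h21
  have hcopX : IsCoprime (X + 1 : (ZMod p)[X]) (gp p m 1 * gp p m (-1)) := by
    have hev : ∀ ε : ZMod p, ε ≠ 0 → IsCoprime (X + 1 : (ZMod p)[X]) (gp p m ε) := by
      intro ε hε0
      have hc := isCoprime_of_eval_ne (gp p m ε) (-1) (by
        simp [gp, hε0])
      rw [map_neg, map_one, sub_neg_eq_add] at hc
      exact hc.symm
    exact (hev 1 one_ne_zero).mul_right (hev (-1) (by
      intro hcon
      exact one_ne_zero (by rw [← neg_neg (1 : ZMod p), hcon, neg_zero])))
  rw [L_eq_prod p m hm]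
  exact hcopX.mul_dvd hX1 (hcop12.mul_dvd hg1 hg2)

lemma L_natDegree (hm : p = 2*(m+1)+1) : (Lp p).natDegree = 2 * p + 1 := by
  rw [L_eq_prod p m hm, show (X + 1 : (ZMod p)[X]) = X + C 1 by rw [C_1],
    (Polynomial.monic_X_add_C (1 : ZMod p)).natDegree_mul
      ((gp_monic p m).mul (gp_monic p m)),
    (gp_monic p m).natDegree_mul (gp_monic p m),
    Polynomial.natDegree_X_add_C, gp_natDegree, gp_natDegree]
  omega

end G
end SplitLAux


/-- Lemma: for an odd prime `p`, the splitting field of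
`L(X) = X^{2p+1} + X^{2p} + ⋯ + X^2 - X - 1 = (∑_{k=2}^{2p+1} X^k) - X - 1` over
`F_p = ℤ/pℤ` is the field `GF(p, p)` with `p^p` elements. -/
theorem splitting_field_of_L
    (p : ℕ) [Fact p.Prime] (hodd : Odd p) :
    Polynomial.IsSplittingField (ZMod p) (GaloisField p p)
      ((∑ k ∈ Finset.Icc 2 (2 * p + 1), X ^ k) - X - 1 : Polynomial (ZMod p)) := by
  have hp : p.Prime := Fact.out
  obtain ⟨m', hm'⟩ := hodd
  have hm'' : 1 ≤ m' := by
    rcases Nat.lt_or_ge m' 1 with h | h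
    · exfalso; interval_cases m'
      · rw [hm'] at hp; norm_num at hp
    · exact h
  obtain ⟨m, rfl⟩ : ∃ m, m' = m + 1 := ⟨m' - 1, by omega⟩
  have hm : p = 2 * (m + 1) + 1 := hm'
  have hLp : ((∑ k ∈ Finset.Icc 2 (2 * p + 1), X ^ k) - X - 1 : Polynomial (ZMod p))
      = SplitLAux.Lp p := rfl
  rw [hLp]
  have hdvd : SplitLAux.Lp p ∣ (X ^ (p^p) - X : (ZMod p)[X]) := SplitLAux.L_dvd_qX p m hm
  have hq1 : p ^ p ≠ 1 := Nat.ne_of_gt (Nat.one_lt_pow hp.pos.ne' hp.one_lt)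
  have hM0 : (X ^ (p^p) - X : (ZMod p)[X]) ≠ 0 := by
    intro h
    have := congrArg (fun f => Polynomial.coeff f (p^p)) h
    simp [Polynomial.coeff_X, Ne.symm hq1] at this
  have hMsplits : Splits ((X ^ (p^p) - X : (ZMod p)[X]).map (algebraMap (ZMod p) (GaloisField p p))) :=
    by
    letI := Fintype.ofFinite (GaloisField p p)
    have := FiniteField.isSplittingField_sub (GaloisField p p) (ZMod p)
    rw [Fintype.card_eq_nat_card, GaloisField.card p p hp.pos.ne'] at this
    exact this.splits'
  have hsplits : Splits ((SplitLAux.Lp p).map (algebraMap (ZMod p) (GaloisField p p))) :=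
    hMsplits.of_dvd (Polynomial.map_ne_zero hM0) (Polynomial.map_dvd _ hdvd)
  have hsep : (SplitLAux.Lp p).Separable :=
    (galois_poly_separable p (p^p) (dvd_pow_self p hp.pos.ne')).of_dvd hdvd
  constructor
  · exact hsplits
  · have hsimple : IsSimpleOrder (Subalgebra (ZMod p) (GaloisField p p)) := by
      apply Subalgebra.isSimpleOrder_of_finrank_prime
      rwa [GaloisField.finrank p hp.pos.ne']
    rcases hsimple.eq_bot_or_eq_top
      (Algebra.adjoin (ZMod p)
        ((SplitLAux.Lp p).rootSet (GaloisField p p) : Set (GaloisField p p)))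
        with hbot | htop
    · exfalso
      classical
      have hcard : Fintype.card ((SplitLAux.Lp p).rootSet (GaloisField p p))
          = (SplitLAux.Lp p).natDegree :=
        Polynomial.card_rootSet_eq_natDegree hsep hsplits
      have hsub : ((SplitLAux.Lp p).rootSet (GaloisField p p) : Set (GaloisField p p))
          ⊆ Set.range (algebraMap (ZMod p) (GaloisField p p)) := by
        intro x hx
        have hx2 : x ∈ Algebra.adjoin (ZMod p)
            ((SplitLAux.Lp p).rootSet (GaloisField p p) : Set (GaloisField p p)) :=
          Algebra.subset_adjoin hx
        rw [hbot] at hx2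
        exact Algebra.mem_bot.mp hx2
      choose fn hfn using fun x : ((SplitLAux.Lp p).rootSet (GaloisField p p)) => hsub x.2
      have hinj : Function.Injective fn := by
        intro a b hab
        apply Subtype.ext
        rw [← hfn a, ← hfn b, hab]
      have hle := Fintype.card_le_of_injective fn hinj
      rw [hcard, SplitLAux.L_natDegree p m hm, ZMod.card] at hle
      omega
    · exact htop
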